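/- Let η ∈ (0,1) and k ≥ 1 be an integer, and define p_u = η/((k+1)η + 1) for 0 ≤ u ≤ k−1 and p_k = (1+η)/((k+1)η + 1). Then for every 0 ≤ v ≤ k, Σ_{u=v}^{k} p_u·(1−η)^{u−v} ≤ (1+η)/((k+1)η + 1). -/

import Mathlib

/-- Let `η ∈ (0,1)`, `k ≥ 1`, and let `p u = η/((k+1)η + 1)` for
`u < k` and `p k = (1+η)/((k+1)η + 1)`.  Then for every `v ≤ k`,
`Σ_{u=v}^{k} p u · (1-η)^(u-v) ≤ (1+η)/((k+1)η + 1)`. -/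
theorem hard_distribution_tail_sum (η : ℝ) (hη0 : 0 < η) (hη1 : η < 1)
    (k : ℕ) (hk : 1 ≤ k) (p : ℕ → ℝ)
    (hpu : ∀ u, u < k → p u = η / (((k : ℝ) + 1) * η + 1))
    (hpk : p k = (1 + η) / (((k : ℝ) + 1) * η + 1)) :
    ∀ v, v ≤ k →
      ∑ u ∈ Finset.Icc v k, p u * (1 - η) ^ (u - v) ≤
        (1 + η) / (((k : ℝ) + 1) * η + 1) := by
  have hDpos : (0:ℝ) < ((k : ℝ) + 1) * η + 1 := by positivity
  intro v hv
  obtain ⟨n, hn⟩ : ∃ n, k - v = n := ⟨_, rfl⟩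
  induction n generalizing v with
  | zero =>
    have hvk : v = k := by omega
    subst hvk
    simp [Finset.Icc_self, hpk]
  | succ n ih =>
    have hvk : v < k := by omega
    have hrw : Finset.Icc v k = Finset.Ico v (k+1) := by
      rw [Finset.Ico_add_one_right_eq_Icc]
    have hrw2 : Finset.Icc (v+1) k = Finset.Ico (v+1) (k+1) := by
      rw [Finset.Ico_add_one_right_eq_Icc]
    rw [hrw, Finset.sum_eq_sum_Ico_succ_bot (by omega)]
    have hsplit : ∑ u ∈ Finset.Ico (v+1) (k+1), p u * (1 - η) ^ (u - v)
        = (1 - η) * ∑ u ∈ Finset.Icc (v+1) k, p u * (1 - η) ^ (u - (v+1)) := by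
      rw [hrw2, Finset.mul_sum]
      refine Finset.sum_congr rfl ?_
      intro u hu
      have hu1 : v + 1 ≤ u := (Finset.mem_Ico.mp hu).1
      have : u - v = (u - (v+1)) + 1 := by omega
      rw [this, pow_succ]
      ring
    rw [hsplit]
    have hih := ih (v+1) (by omega) (by omega)
    have h1η : (0:ℝ) < 1 - η := by linarith
    have hbound : (1 - η) * ∑ u ∈ Finset.Icc (v+1) k, p u * (1 - η) ^ (u - (v+1))
        ≤ (1 - η) * ((1 + η) / (((k : ℝ) + 1) * η + 1)) :=
      mul_le_mul_of_nonneg_left hih (le_of_lt h1η)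
    have hpv : p v = η / (((k : ℝ) + 1) * η + 1) := hpu v hvk
    have : p v * (1 - η) ^ (v - v) = η / (((k : ℝ) + 1) * η + 1) := by
      simp [hpv]
    rw [this]
    have hfin : η / (((k : ℝ) + 1) * η + 1) + (1 - η) * ((1 + η) / (((k : ℝ) + 1) * η + 1))
        ≤ (1 + η) / (((k : ℝ) + 1) * η + 1) := by
      rw [← mul_div_assoc, ← add_div]
      rw [div_le_div_iff₀ hDpos hDpos]
      nlinarith [mul_pos (mul_pos hη0 hη0) hDpos]
    linarith
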